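/- Let m, n be positive integers. For every subset W ⊆ Fin m × Fin n, exactly one of the following holds: (1) there exists a monotone map x : Fin m → Fin n such that for every monotone map y : Fin n → Fin m all deals of (x,y) lie in W; or (2) there exists a monotone map y : Fin n → Fin m such that for every monotone map x : Fin m → Fin n all deals of (x,y) lie in the complement of W. (That is, the monotone bargaining game correspondence G_{m,n} is tight.) -/

import Mathlib

/-- Tightness of the monotone bargaining game correspondence: for every set
`W` of outcomes, exactly one of the two players is effective for his/her
part (`W` for Alice, the complement of `W` for Bob). -/
theorem monotone_bargaining_tight
    (m n : ℕ) (hm : 0 < m) (hn : 0 < n)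
    (W : Set (Fin m × Fin n)) :
    Xor'
      (∃ x : Fin m → Fin n, Monotone x ∧
        ∀ y : Fin n → Fin m, Monotone y →
          ∀ p : Fin m × Fin n, x p.1 = p.2 → y p.2 = p.1 → p ∈ W)
      (∃ y : Fin n → Fin m, Monotone y ∧
        ∀ x : Fin m → Fin n, Monotone x →
          ∀ p : Fin m × Fin n, x p.1 = p.2 → y p.2 = p.1 → p ∈ Wᶜ) := by
  obtain ⟨m, rfl⟩ : ∃ k, m = k + 1 := ⟨m - 1, (Nat.succ_pred_eq_of_pos hm).symm⟩
  obtain ⟨n, rfl⟩ : ∃ k, n = k + 1 := ⟨n - 1, (Nat.succ_pred_eq_of_pos hn).symm⟩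
  -- every pair of monotone strategies has a deal
  have fixpt : ∀ (x : Fin (m+1) → Fin (n+1)) (y : Fin (n+1) → Fin (m+1)),
      Monotone x → Monotone y → ∃ a, y (x a) = a := by
    intro x y hx hy
    classical
    have hs : (Finset.univ.filter (fun a : Fin (m+1) => y (x a) ≤ a)).Nonempty :=
      ⟨Fin.last m, by simp [Fin.le_last]⟩
    set a := (Finset.univ.filter (fun a : Fin (m+1) => y (x a) ≤ a)).min' hs with ha
    have hmem := (Finset.univ.filter (fun a : Fin (m+1) => y (x a) ≤ a)).min'_mem hs
    rw [Finset.mem_filter] at hmem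
    have h1 : y (x a) ≤ a := hmem.2
    have h2 : a ≤ y (x a) := by
      apply Finset.min'_le
      rw [Finset.mem_filter]
      exact ⟨Finset.mem_univ _, hy (hx h1)⟩
    exact ⟨a, le_antisymm h1 h2⟩
  have notboth : ¬ ((∃ x : Fin (m+1) → Fin (n+1), Monotone x ∧
        ∀ y : Fin (n+1) → Fin (m+1), Monotone y →
          ∀ p : Fin (m+1) × Fin (n+1), x p.1 = p.2 → y p.2 = p.1 → p ∈ W) ∧
      (∃ y : Fin (n+1) → Fin (m+1), Monotone y ∧
        ∀ x : Fin (m+1) → Fin (n+1), Monotone x →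
          ∀ p : Fin (m+1) × Fin (n+1), x p.1 = p.2 → y p.2 = p.1 → p ∈ Wᶜ)) := by
    rintro ⟨⟨x, hx, hxW⟩, ⟨y, hy, hyW⟩⟩
    obtain ⟨a, ha⟩ := fixpt x y hx hy
    have h1 : ((a, x a) : Fin (m+1) × Fin (n+1)) ∈ W := hxW y hy (a, x a) rfl ha
    have h2 : ((a, x a) : Fin (m+1) × Fin (n+1)) ∈ Wᶜ := hyW x hx (a, x a) rfl ha
    exact h2 h1
  have main : (∃ x : Fin (m+1) → Fin (n+1), Monotone x ∧
        ∀ y : Fin (n+1) → Fin (m+1), Monotone y →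
          ∀ p : Fin (m+1) × Fin (n+1), x p.1 = p.2 → y p.2 = p.1 → p ∈ W) ∨
      (∃ y : Fin (n+1) → Fin (m+1), Monotone y ∧
        ∀ x : Fin (m+1) → Fin (n+1), Monotone x →
          ∀ p : Fin (m+1) × Fin (n+1), x p.1 = p.2 → y p.2 = p.1 → p ∈ Wᶜ) := by
    classical
    by_cases hA : ∃ x : Fin (m+1) → Fin (n+1), Monotone x ∧ ∀ a, (a, x a) ∈ W
    · left
      obtain ⟨x, hx, hxW⟩ := hA
      refine ⟨x, hx, fun y hy p hp1 hp2 => ?_⟩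
      have := hxW p.1
      rw [hp1] at this
      simpa using this
    · right
      -- the reachability predicate: a monotone partial staircase inside W
      -- from row 0 to row a, ending at column ≤ b
      set P : Fin (m+1) → Fin (n+1) → Prop :=
        fun a b => ∃ x : Fin (m+1) → Fin (n+1), Monotone x ∧ x a ≤ b ∧
          ∀ a' ≤ a, (a', x a') ∈ W with hPdef
      have Pmono : ∀ {a : Fin (m+1)} {b b' : Fin (n+1)}, P a b → b ≤ b' → P a b' := by
        rintro a b b' ⟨x, hx, hxa, hxw⟩ hbb'
        exact ⟨x, hx, hxa.trans hbb', hxw⟩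
      have Plast : ∀ b, ¬ P (Fin.last m) b := by
        rintro b ⟨x, hx, -, hxw⟩
        exact hA ⟨x, hx, fun a => hxw a (Fin.le_last a)⟩
      have hQ : ∀ b : Fin (n+1), ∃ k, ∀ h : k < m + 1, ¬ P ⟨k, h⟩ b := by
        intro b
        exact ⟨m, fun h => Plast b⟩
      have hfindlt : ∀ b : Fin (n+1), Nat.find (hQ b) < m + 1 := by
        intro b
        have : Nat.find (hQ b) ≤ m := Nat.find_le (fun h => Plast b)
        omega
      set y : Fin (n+1) → Fin (m+1) := fun b => ⟨Nat.find (hQ b), hfindlt b⟩ with hydef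
      have hy : Monotone y := by
        intro b b' hbb'
        show (⟨Nat.find (hQ b), _⟩ : Fin (m+1)) ≤ ⟨Nat.find (hQ b'), _⟩
        rw [Fin.mk_le_mk]
        exact Nat.find_mono (fun k hk h hPb => hk h (Pmono hPb hbb'))
      have hyW : ∀ b : Fin (n+1), ((y b, b) : Fin (m+1) × Fin (n+1)) ∉ W := by
        intro b hmem
        have hspec : ¬ P (y b) b := Nat.find_spec (hQ b) (hfindlt b)
        apply hspec
        cases hk : Nat.find (hQ b) with
        | zero =>
          have hy0 : y b = 0 := by
            apply Fin.ext
            show Nat.find (hQ b) = ((0 : Fin (m+1)) : ℕ)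
            rw [hk, Fin.val_zero]
          refine ⟨fun _ => b, monotone_const, le_refl b, fun a' ha' => ?_⟩
          have : a' = y b := by
            rw [hy0] at ha' ⊢
            exact le_antisymm ha' (Fin.zero_le _)
          rw [this]
          exact hmem
        | succ j =>
          have hj : j < Nat.find (hQ b) := by omega
          have hjm : j < m + 1 := by
            have := hfindlt b
            omega
          have hPj : P ⟨j, hjm⟩ b := by
            have hmin := Nat.find_min (hQ b) hj
            push_neg at hmin
            obtain ⟨h, hP⟩ := hmin
            exact hP
          obtain ⟨x, hx, hxa, hxw⟩ := hPj
          set x' : Fin (m+1) → Fin (n+1) :=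
            fun t => if t ≤ (⟨j, hjm⟩ : Fin (m+1)) then x t else b with hx'def
          have hx'mono : Monotone x' := by
            intro s t hst
            by_cases hs : s ≤ (⟨j, hjm⟩ : Fin (m+1)) <;>
              by_cases ht : t ≤ (⟨j, hjm⟩ : Fin (m+1)) <;>
              simp only [hx'def, hs, ht, if_true, if_false, if_pos, if_neg, not_false_iff]
            · exact hx hst
            · exact (hx hs).trans hxa
            · exact absurd (hst.trans ht) hs
            · exact le_refl b
          have hybval : (y b : ℕ) = j + 1 := by show Nat.find (hQ b) = j + 1; exact hk
          have hnotle : ¬ (y b ≤ (⟨j, hjm⟩ : Fin (m+1))) := by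
            rw [Fin.le_def]
            show ¬ (y b : ℕ) ≤ j
            omega
          refine ⟨x', hx'mono, ?_, ?_⟩
          · rw [hx'def]
            simp only [hnotle, if_false]
            exact le_refl b
          · intro a' ha'
            by_cases ha'j : a' ≤ (⟨j, hjm⟩ : Fin (m+1))
            · have : x' a' = x a' := by simp [hx'def, ha'j]
              rw [this]
              exact hxw a' ha'j
            · have ha'eq : a' = y b := by
                apply Fin.ext
                rw [Fin.le_def] at ha' ha'j
                rw [hybval] at ha' ⊢
                simp only [not_le] at ha'j
                omega
              have : x' a' = b := by simp [hx'def, ha'j]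
              rw [this, ha'eq]
              exact hmem
      refine ⟨y, hy, fun x hx p hp1 hp2 => ?_⟩
      have := hyW p.2
      rw [hp2] at this
      simpa using this
  rcases main with h | h
  · exact Or.inl ⟨h, fun hB => notboth ⟨h, hB⟩⟩
  · exact Or.inr ⟨h, fun hA => notboth ⟨hA, h⟩⟩
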